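/- Let X be a finite-dimensional real Banach space with basis {x₁,…,xₙ} satisfying property (*): for each i, xᵢ ⊥_B span{x_j : j ≠ i}. Let Y be a normed linear space and T : X → Y linear with ‖T‖ = 1. Suppose for each i there is εᵢ ∈ [0,1) such that T is B D^{εᵢ}-preserving at xᵢ, and Txᵢ ≠ 0 for all i. Then T is injective. -/

import Mathlib

theorem stmt_13 {X Y : Type*} [NormedAddCommGroup X] [NormedSpace ℝ X]
    [NormedAddCommGroup Y] [NormedSpace ℝ Y]
    [CompleteSpace X] [FiniteDimensional ℝ X]
    (n : ℕ) (b : Module.Basis (Fin n) ℝ X)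
    (hstar : ∀ i : Fin n, ∀ m ∈ Submodule.span ℝ (Set.range fun j : {j : Fin n // j ≠ i} => b j),
      ∀ l : ℝ, ‖b i + l • m‖ ≥ ‖b i‖)
    (T : X →L[ℝ] Y) (hTnorm : ‖T‖ = 1)
    (ε : Fin n → ℝ) (hε : ∀ i, 0 ≤ ε i ∧ ε i < 1)
    (hpres : ∀ i : Fin n, ∀ y : X, (∀ l : ℝ, ‖b i + l • y‖ ≥ ‖b i‖) →
      ∀ l : ℝ, ‖T (b i) + l • T y‖ ≥ Real.sqrt (1 - (ε i) ^ 2) * ‖T (b i)‖)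
    (hTb : ∀ i, T (b i) ≠ 0) :
    Function.Injective T := by
  have key : ∀ x : X, T x = 0 → x = 0 := by
    intro x hx
    by_contra hx0
    obtain ⟨i, hi⟩ : ∃ i, b.repr x i ≠ 0 := by
      by_contra h
      push_neg at h
      apply hx0
      have : b.repr x = 0 := Finsupp.ext h
      simpa using congrArg b.repr.symm this
    set c : ℝ := b.repr x i with hc
    have hm : x - c • b i ∈
        Submodule.span ℝ (Set.range fun j : {j : Fin n // j ≠ i} => b j) := by
      have hx' : ∑ j, b.repr x j • b j = x := b.sum_repr x
      rw [← hx', ← Finset.sum_erase_add _ _ (Finset.mem_univ i)]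
      simp only [hc, add_sub_cancel_right]
      refine Submodule.sum_mem _ fun j hj => Submodule.smul_mem _ _ ?_
      exact Submodule.subset_span ⟨⟨j, Finset.ne_of_mem_erase hj⟩, rfl⟩
    have hy : c⁻¹ • (x - c • b i) ∈
        Submodule.span ℝ (Set.range fun j : {j : Fin n // j ≠ i} => b j) :=
      Submodule.smul_mem _ _ hm
    have horth := hstar i _ hy
    have hkey := hpres i _ horth 1
    have heq : b i + (1 : ℝ) • (c⁻¹ • (x - c • b i)) = c⁻¹ • x := by
      rw [one_smul, smul_sub, smul_smul, inv_mul_cancel₀ hi, one_smul]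
      abel
    have hzero : T (b i) + (1 : ℝ) • T (c⁻¹ • (x - c • b i)) = 0 := by
      rw [← map_smul, ← map_add, heq, map_smul, hx, smul_zero]
    rw [hzero, norm_zero] at hkey
    have hsq : 0 < 1 - (ε i) ^ 2 := by
      nlinarith [(hε i).1, (hε i).2]
    have hpos : 0 < Real.sqrt (1 - (ε i) ^ 2) * ‖T (b i)‖ :=
      mul_pos (Real.sqrt_pos.mpr hsq) (norm_pos_iff.mpr (hTb i))
    linarith
  intro a b hab
  have : T (a - b) = 0 := by rw [map_sub, hab, sub_self]
  have := key _ this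
  exact sub_eq_zero.mp this
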